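/- (Error bound for truncated SVD frame projection.) With notation as above, the truncated SVD projection satisfies ‖f − P_N^ε f‖ ≤ inf{ ‖f − T_N z‖ + √ε ‖z‖ : z ∈ ℂᴺ } for every f ∈ H. -/

import Mathlib

open scoped InnerProductSpace

/-- Error bound for the truncated SVD frame projection:
`‖f − P_N^ε f‖ ≤ inf{ ‖f − T_N z‖ + √ε ‖z‖ : z ∈ ℂᴺ }`. -/
theorem stmt_13 {H : Type*} [NormedAddCommGroup H] [InnerProductSpace ℂ H]
    {N : ℕ} (φ : Fin N → H) (hφ : LinearIndependent ℂ φ)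
    (T : EuclideanSpace ℂ (Fin N) →ₗ[ℂ] H)
    (hT : ∀ x : EuclideanSpace ℂ (Fin N), T x = ∑ n, x n • φ n)
    (G : Matrix (Fin N) (Fin N) ℂ) (hGdef : ∀ n m, G n m = ⟪φ n, φ m⟫_ℂ)
    (σ : Fin N → ℝ) (hσ : ∀ k, 0 < σ k)
    (v : Fin N → EuclideanSpace ℂ (Fin N)) (hv : Orthonormal ℂ v)
    (heig : ∀ k, Matrix.toEuclideanCLM (𝕜 := ℂ) G (v k) = (σ k : ℂ) • v k)
    (ξ : Fin N → H) (hξ : ∀ k, ξ k = ∑ n, v k n • φ n)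
    (ε : ℝ) (hε : 0 < ε) (f : H) :
    ∀ z : EuclideanSpace ℂ (Fin N),
      ‖f - ∑ k ∈ Finset.univ.filter (fun k => ε < σ k),
          ((σ k : ℂ)⁻¹ * ⟪ξ k, f⟫_ℂ) • ξ k‖ ≤
        ‖f - T z‖ + Real.sqrt ε * ‖z‖ := by
  intro z
  classical
  set S : Finset (Fin N) := Finset.univ.filter (fun k => ε < σ k) with hSdef
  have happ : ∀ (x : EuclideanSpace ℂ (Fin N)) n,
      Matrix.toEuclideanCLM (𝕜 := ℂ) G x n = ∑ m, G n m * x m := by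
    intro x n; rfl
  -- Gram structure of the ξ's
  have hG : ∀ j k, ⟪ξ j, ξ k⟫_ℂ = if j = k then (σ k : ℂ) else 0 := by
    intro j k
    have h1 : ⟪ξ j, ξ k⟫_ℂ = ⟪v j, Matrix.toEuclideanCLM (𝕜 := ℂ) G (v k)⟫_ℂ := by
      rw [hξ, hξ, PiLp.inner_apply]
      simp only [inner_sum, sum_inner, inner_smul_left, inner_smul_right, happ,
        RCLike.inner_apply, Finset.mul_sum]
      rw [Finset.sum_comm]
      refine Finset.sum_congr rfl fun n _ => ?_
      rw [Finset.sum_mul]; refine Finset.sum_congr rfl fun m _ => ?_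
      rw [hGdef]; ring
    rw [h1, heig k, inner_smul_right, orthonormal_iff_ite.mp hv j k]
    by_cases h : j = k <;> simp [h]
  -- orthonormal basis from v
  have hcard : Fintype.card (Fin N) = Module.finrank ℂ (EuclideanSpace ℂ (Fin N)) := by
    simp
  let b : OrthonormalBasis (Fin N) ℂ (EuclideanSpace ℂ (Fin N)) :=
    OrthonormalBasis.mk hv
      ((hv.linearIndependent.span_eq_top_of_card_eq_finrank' hcard).ge)
  have hb : ∀ k, b k = v k := fun k => congrFun (OrthonormalBasis.coe_mk hv _) k
  set c : Fin N → ℂ := fun k => ⟪v k, z⟫_ℂ with hcdef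
  have hz : ∑ k, c k • v k = z := by
    have := b.sum_repr' z
    simpa [hb, hcdef] using this
  have hTv : ∀ k, T (v k) = ξ k := by
    intro k; rw [hT, hξ]
  have hTz : T z = ∑ k, c k • ξ k := by
    conv_lhs => rw [← hz]
    rw [map_sum]
    simp [hTv]
  -- Parseval
  have hzsum : ‖z‖ ^ 2 = ∑ k, ‖c k‖ ^ 2 := by
    have h1 : ⟪z, z⟫_ℂ = ((∑ k, ‖c k‖ ^ 2 : ℝ) : ℂ) := by
      rw [← b.sum_inner_mul_inner z z]
      push_cast
      refine Finset.sum_congr rfl fun k _ => ?_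
      have e1 : ⟪z, b k⟫_ℂ = (starRingEnd ℂ) (c k) := by
        rw [hb, ← inner_conj_symm]
      rw [e1, hb, mul_comm, Complex.mul_conj, Complex.normSq_eq_norm_sq]
      push_cast
      ring
    rw [← inner_self_eq_norm_sq (𝕜 := ℂ) z, h1, RCLike.re_to_complex,
      Complex.ofReal_re]
  -- norm of combinations of ξ's
  have hns : ∀ (A : Finset (Fin N)) (a : Fin N → ℂ),
      ‖∑ k ∈ A, a k • ξ k‖ ^ 2 = ∑ k ∈ A, ‖a k‖ ^ 2 * σ k := by
    intro A a
    have h1 : ⟪∑ k ∈ A, a k • ξ k, ∑ k ∈ A, a k • ξ k⟫_ℂ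
        = ((∑ k ∈ A, ‖a k‖ ^ 2 * σ k : ℝ) : ℂ) := by
      rw [inner_sum]
      push_cast
      refine Finset.sum_congr rfl fun k hk => ?_
      rw [sum_inner]
      simp only [inner_smul_left, inner_smul_right, hG]
      rw [Finset.sum_eq_single k]
      · rw [if_pos rfl, show a k * ((starRingEnd ℂ) (a k) * (σ k : ℂ)) =
          (a k * (starRingEnd ℂ) (a k)) * (σ k : ℂ) by ring, Complex.mul_conj,
          Complex.normSq_eq_norm_sq]
        push_cast; ring
      · intro j _ hjk; simp [hjk]
      · intro hk'; exact absurd hk hk'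
    rw [← inner_self_eq_norm_sq (𝕜 := ℂ), h1, RCLike.re_to_complex,
      Complex.ofReal_re]
  set Pf : H := ∑ k ∈ S, ((σ k : ℂ)⁻¹ * ⟪ξ k, f⟫_ℂ) • ξ k with hPf
  set Pg : H := ∑ k ∈ S, c k • ξ k with hPg
  -- orthogonality of the residual to the ξ's in S
  have horth : ∀ j ∈ S, ⟪ξ j, f - Pf⟫_ℂ = 0 := by
    intro j hj
    rw [inner_sub_right, hPf, inner_sum]
    simp only [inner_smul_right, hG]
    rw [Finset.sum_eq_single j]
    · have : (σ j : ℂ) ≠ 0 := by exact_mod_cast (hσ j).ne'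
      field_simp
      simp
    · intro k _ hkj; simp [Ne.symm hkj]
    · intro hj'; exact absurd hj hj'
  -- step 1 : ‖f - Pf‖ ≤ ‖f - Pg‖
  have hstep1 : ‖f - Pf‖ ≤ ‖f - Pg‖ := by
    have hiz : ⟪f - Pf, Pf - Pg⟫_ℂ = 0 := by
      have : Pf - Pg = ∑ k ∈ S, (((σ k : ℂ)⁻¹ * ⟪ξ k, f⟫_ℂ) - c k) • ξ k := by
        rw [hPf, hPg, ← Finset.sum_sub_distrib]
        refine Finset.sum_congr rfl fun k _ => ?_
        rw [sub_smul]
      rw [this, inner_sum]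
      refine Finset.sum_eq_zero fun k hk => ?_
      have h0 : ⟪f - Pf, ξ k⟫_ℂ = 0 := by
        rw [← inner_conj_symm, horth k hk, map_zero]
      rw [inner_smul_right, h0, mul_zero]
    have hsq : ‖f - Pg‖ ^ 2 = ‖f - Pf‖ ^ 2 + ‖Pf - Pg‖ ^ 2 := by
      have hsplit : f - Pg = (f - Pf) + (Pf - Pg) := by abel
      rw [hsplit]
      simp only [sq]
      exact norm_add_sq_eq_norm_sq_add_norm_sq_of_inner_eq_zero _ _ hiz
    nlinarith [norm_nonneg (f - Pg), norm_nonneg (f - Pf), sq_nonneg ‖Pf - Pg‖]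
  -- step 3 : ‖T z - Pg‖ ≤ √ε * ‖z‖
  have hstep3 : ‖T z - Pg‖ ≤ Real.sqrt ε * ‖z‖ := by
    have hdecomp : T z - Pg = ∑ k ∈ Finset.univ.filter (fun k => ¬ ε < σ k), c k • ξ k := by
      rw [hTz, hPg, hSdef]
      rw [← Finset.sum_filter_add_sum_filter_not Finset.univ (fun k => ε < σ k)
        (fun k => c k • ξ k)]
      abel
    have hsq : ‖T z - Pg‖ ^ 2 ≤ ε * ‖z‖ ^ 2 := by
      rw [hdecomp, hns]
      calc ∑ k ∈ Finset.univ.filter (fun k => ¬ ε < σ k), ‖c k‖ ^ 2 * σ k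
          ≤ ∑ k ∈ Finset.univ.filter (fun k => ¬ ε < σ k), ‖c k‖ ^ 2 * ε := by
            refine Finset.sum_le_sum fun k hk => ?_
            have hk' : σ k ≤ ε := not_lt.mp (Finset.mem_filter.mp hk).2
            exact mul_le_mul_of_nonneg_left hk' (sq_nonneg _)
        _ = ε * ∑ k ∈ Finset.univ.filter (fun k => ¬ ε < σ k), ‖c k‖ ^ 2 := by
            rw [Finset.mul_sum]; exact Finset.sum_congr rfl fun k _ => mul_comm _ _
        _ ≤ ε * ∑ k, ‖c k‖ ^ 2 := by
            refine mul_le_mul_of_nonneg_left ?_ hε.le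
            exact Finset.sum_le_sum_of_subset_of_nonneg (Finset.filter_subset _ _)
              (fun k _ _ => sq_nonneg _)
        _ = ε * ‖z‖ ^ 2 := by rw [hzsum]
    have h2 : (Real.sqrt ε * ‖z‖) ^ 2 = ε * ‖z‖ ^ 2 := by
      rw [mul_pow, Real.sq_sqrt hε.le]
    nlinarith [norm_nonneg (T z - Pg), Real.sqrt_nonneg ε, norm_nonneg z,
      mul_nonneg (Real.sqrt_nonneg ε) (norm_nonneg z)]
  -- combine
  calc ‖f - Pf‖ ≤ ‖f - Pg‖ := hstep1
    _ = ‖(f - T z) + (T z - Pg)‖ := by rw [sub_add_sub_cancel]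
    _ ≤ ‖f - T z‖ + ‖T z - Pg‖ := norm_add_le _ _
    _ ≤ ‖f - T z‖ + Real.sqrt ε * ‖z‖ := by linarith
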